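/- Let g_x, g_v be real numbers and ρ_{x,j}, ρ_{v,j} (j = −2,…,2) real coefficients with Σ_{j=-2}^{2} ρ_{x,j} = Σ_{j=-2}^{2} ρ_{v,j} = 0. Define λ_x(φ) = g_x·Σ_{j=-2}^{2} ρ_{x,j} e^{iφj}, λ_v(φ) = g_v·Σ_{j=-2}^{2} ρ_{v,j} e^{iφj}, and β_{x,j} = ρ_{x,j} − ρ_{x,−j} for j = 1,2. If g_x·(β_{x,1} + 2β_{x,2}) ≠ 0, then there exists ε > 0 such that for every φ with 0 < φ < ε there is a complex number ν with ν² − λ_v(φ)·ν − λ_x(φ) = 0 and Re ν > 0. -/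

import Mathlib

/-- The eigenvalue curve `λ(φ) = g·Σ_{j=-2}^{2} ρ_j e^{iφj}` of a circulant
next-nearest-neighbor Laplacian. -/
noncomputable def lam (g : ℝ) (ρ : ℤ → ℝ) (φ : ℝ) : ℂ :=
  (g : ℂ) * ∑ j ∈ Finset.Icc (-2 : ℤ) 2,
    (ρ j : ℂ) * Complex.exp (Complex.I * (φ : ℂ) * (j : ℂ))

lemma lam_eq (g : ℝ) (ρ : ℤ → ℝ) (φ : ℝ) :
    lam g ρ φ = (g : ℂ) * ∑ j ∈ Finset.Icc (-2 : ℤ) 2,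
      (ρ j : ℂ) * Complex.exp (((φ * (j:ℝ) : ℝ) : ℂ) * Complex.I) := by
  unfold lam
  congr 1
  refine Finset.sum_congr rfl fun j _ => ?_
  push_cast
  ring_nf

lemma lam_im (g : ℝ) (ρ : ℤ → ℝ) (φ : ℝ) :
    (lam g ρ φ).im = g * ∑ j ∈ Finset.Icc (-2 : ℤ) 2, ρ j * Real.sin (φ * (j:ℝ)) := by
  rw [lam_eq, Complex.mul_im, Complex.ofReal_re, Complex.ofReal_im, Complex.im_sum]
  simp only [zero_mul, add_zero]
  congr 1
  refine Finset.sum_congr rfl fun j _ => ?_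
  rw [Complex.mul_im, Complex.ofReal_re, Complex.ofReal_im, Complex.exp_ofReal_mul_I_im,
    zero_mul, add_zero]

lemma lam_abs_le (g : ℝ) (ρ : ℤ → ℝ) (φ : ℝ)
    (hsum : ∑ j ∈ Finset.Icc (-2 : ℤ) 2, ρ j = 0) (hφ : 0 ≤ φ) (hφ1 : φ ≤ 1/2) :
    ‖lam g ρ φ‖ ≤ (4 * |g| * ∑ j ∈ Finset.Icc (-2 : ℤ) 2, |ρ j|) * φ := by
  have hρ0 : ∑ j ∈ Finset.Icc (-2 : ℤ) 2, ((ρ j : ℂ)) = 0 := by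
    rw [← Complex.ofReal_sum, hsum, Complex.ofReal_zero]
  have key : lam g ρ φ = (g : ℂ) * ∑ j ∈ Finset.Icc (-2 : ℤ) 2,
      (ρ j : ℂ) * (Complex.exp (((φ * (j:ℝ) : ℝ) : ℂ) * Complex.I) - 1) := by
    rw [lam_eq]
    congr 1
    have : ∑ j ∈ Finset.Icc (-2 : ℤ) 2,
        (ρ j : ℂ) * (Complex.exp (((φ * (j:ℝ) : ℝ) : ℂ) * Complex.I) - 1)
        = (∑ j ∈ Finset.Icc (-2 : ℤ) 2,
            (ρ j : ℂ) * Complex.exp (((φ * (j:ℝ) : ℝ) : ℂ) * Complex.I))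
          - ∑ j ∈ Finset.Icc (-2 : ℤ) 2, (ρ j : ℂ) := by
      rw [← Finset.sum_sub_distrib]
      exact Finset.sum_congr rfl fun j _ => by ring
    rw [this, hρ0, sub_zero]
  rw [key, norm_mul, Complex.norm_real, Real.norm_eq_abs]
  have hterm : ∀ j ∈ Finset.Icc (-2 : ℤ) 2,
      ‖(ρ j : ℂ) * (Complex.exp (((φ * (j:ℝ) : ℝ) : ℂ) * Complex.I) - 1)‖
        ≤ |ρ j| * (4 * φ) := by
    intro j hj
    rw [Finset.mem_Icc] at hj
    have hjabs : |(j:ℝ)| ≤ 2 := by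
      rw [abs_le]
      constructor <;> [exact_mod_cast hj.1; exact_mod_cast hj.2]
    rw [norm_mul, Complex.norm_real, Real.norm_eq_abs]
    refine mul_le_mul_of_nonneg_left ?_ (abs_nonneg _)
    have habs1 : ‖((φ * (j:ℝ) : ℝ) : ℂ) * Complex.I‖ ≤ 1 := by
      rw [norm_mul, Complex.norm_I, Complex.norm_real, Real.norm_eq_abs, mul_one, abs_mul, abs_of_nonneg hφ]
      calc φ * |(j:ℝ)| ≤ φ * 2 := mul_le_mul_of_nonneg_left hjabs hφ
        _ ≤ 1 := by linarith
    refine (Complex.norm_exp_sub_one_le habs1).trans ?_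
    rw [norm_mul, Complex.norm_I, Complex.norm_real, Real.norm_eq_abs, mul_one, abs_mul, abs_of_nonneg hφ]
    calc 2 * (φ * |(j:ℝ)|) ≤ 2 * (φ * 2) := by
          exact mul_le_mul_of_nonneg_left (mul_le_mul_of_nonneg_left hjabs hφ) (by norm_num)
      _ = 4 * φ := by ring
  calc |g| * ‖∑ j ∈ Finset.Icc (-2 : ℤ) 2, (ρ j : ℂ) * (Complex.exp (((φ * (j:ℝ) : ℝ) : ℂ) * Complex.I) - 1)‖
      ≤ |g| * ∑ j ∈ Finset.Icc (-2 : ℤ) 2, |ρ j| * (4 * φ) := by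
        refine mul_le_mul_of_nonneg_left ?_ (abs_nonneg g)
        exact (norm_sum_le _ _).trans (Finset.sum_le_sum hterm)
    _ = (4 * |g| * ∑ j ∈ Finset.Icc (-2 : ℤ) 2, |ρ j|) * φ := by
        rw [← Finset.sum_mul]
        ring

lemma lam_im_eq (g : ℝ) (ρ : ℤ → ℝ) (φ : ℝ) :
    (lam g ρ φ).im = g * ((ρ 1 - ρ (-1)) * Real.sin φ + (ρ 2 - ρ (-2)) * Real.sin (2*φ)) := by
  rw [lam_im]
  rw [show (Finset.Icc (-2:ℤ) 2) = {-2,-1,0,1,2} from by decide]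
  congr 1
  simp [Finset.sum_insert, Finset.mem_insert]
  rw [show (2:ℝ)*φ = φ*2 by ring]
  ring

lemma sin_close (x : ℝ) (h0 : 0 < x) (h1 : x ≤ 1) : |Real.sin x - x| ≤ x^3/4 := by
  rw [abs_le]
  constructor
  · nlinarith [Real.sin_gt_sub_cube h0, pow_pos h0 3]
  · nlinarith [Real.sin_lt h0, pow_pos h0 3]

set_option maxHeartbeats 2000000 in
/-- Lemma 4(i) of the paper: for the decentralized next-nearest-neighbor
system, if `g_x·(β_{x,1} + 2β_{x,2}) ≠ 0` (where `β_{x,j} = ρ_{x,j} − ρ_{x,−j}`),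
then for all sufficiently small `φ > 0` the characteristic equation
`ν² − λ_v(φ)ν − λ_x(φ) = 0` has a root with positive real part. -/
theorem unstable_of_betaSum_ne_zero (gx gv : ℝ) (ρx ρv : ℤ → ℝ)
    (hxsum : ∑ j ∈ Finset.Icc (-2 : ℤ) 2, ρx j = 0)
    (hvsum : ∑ j ∈ Finset.Icc (-2 : ℤ) 2, ρv j = 0)
    (h : gx * ((ρx 1 - ρx (-1)) + 2 * (ρx 2 - ρx (-2))) ≠ 0) :
    ∃ ε > 0, ∀ φ : ℝ, 0 < φ → φ < ε →
      ∃ ν : ℂ, ν ^ 2 - lam gv ρv φ * ν - lam gx ρx φ = 0 ∧ 0 < ν.re := by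
  set β1 := ρx 1 - ρx (-1) with hβ1
  set β2 := ρx 2 - ρx (-2) with hβ2
  set B := gx * (β1 + 2 * β2) with hBdef
  have hBpos : 0 < |B| := abs_pos.mpr h
  set K := |gx| * (|β1| + 8 * |β2|) with hKdef
  have hBK : |B| ≤ K := by
    rw [hBdef, hKdef, abs_mul]
    refine mul_le_mul_of_nonneg_left ?_ (abs_nonneg gx)
    calc |β1 + 2*β2| ≤ |β1| + |2*β2| := abs_add_le _ _
      _ ≤ |β1| + 8* |β2| := by rw [abs_mul, abs_two]; nlinarith [abs_nonneg β2]
  have hKpos : 0 < K := lt_of_lt_of_le hBpos hBK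
  set Sx := ∑ j ∈ Finset.Icc (-2 : ℤ) 2, |ρx j| with hSxdef
  set Sv := ∑ j ∈ Finset.Icc (-2 : ℤ) 2, |ρv j| with hSvdef
  set Mx := 4 * |gx| * Sx with hMxdef
  set Mv := 4 * |gv| * Sv with hMvdef
  have hSv0 : 0 ≤ Sv := Finset.sum_nonneg fun j _ => abs_nonneg _
  have hMv0 : 0 ≤ Mv := by rw [hMvdef]; positivity
  have hBMx : |B| ≤ Mx := by
    have hexp : Sx = |ρx (-2)| + |ρx (-1)| + |ρx 0| + |ρx 1| + |ρx 2| := by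
      rw [hSxdef, show (Finset.Icc (-2:ℤ) 2) = {-2,-1,0,1,2} from by decide]
      simp [Finset.sum_insert, Finset.mem_insert]
      ring
    rw [hBdef, hMxdef, abs_mul]
    have h1 : |β1 + 2*β2| ≤ 4 * Sx := by
      have a1 : |β1| ≤ |ρx 1| + |ρx (-1)| := abs_sub _ _
      have a2 : |β2| ≤ |ρx 2| + |ρx (-2)| := abs_sub _ _
      have a3 : |β1 + 2*β2| ≤ |β1| + 2* |β2| := by
        refine (abs_add_le _ _).trans ?_
        rw [abs_mul, abs_two]
      rw [hexp]
      have := abs_nonneg (ρx 0)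
      have := abs_nonneg (ρx (-2))
      have := abs_nonneg (ρx (-1))
      have := abs_nonneg (ρx 1)
      have := abs_nonneg (ρx 2)
      linarith
    calc |gx| * |β1 + 2*β2| ≤ |gx| * (4 * Sx) := mul_le_mul_of_nonneg_left h1 (abs_nonneg gx)
      _ = 4 * |gx| * Sx := by ring
  have hMx0 : 0 < Mx := lt_of_lt_of_le hBpos hBMx
  set A := Mv^2 + 4*Mx with hAdef
  clear_value β1 β2 B K Sx Sv Mx Mv A
  have hApos : 0 < A := by rw [hAdef]; nlinarith [sq_nonneg Mv]
  refine ⟨min (min (1/2) (|B|/(4*K))) (min (|B|/(Mv^2+1)) (|B|^2/(A*(Mv+1)^2))), ?_, ?_⟩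
  · refine lt_min (lt_min (by norm_num) ?_) (lt_min ?_ ?_)
    · exact div_pos hBpos (by linarith)
    · exact div_pos hBpos (by nlinarith [sq_nonneg Mv])
    · exact div_pos (by positivity) (by positivity)
  intro φ hφ0 hφε
  rw [lt_min_iff, lt_min_iff, lt_min_iff] at hφε
  obtain ⟨⟨hφ12, hφK⟩, hφMv, hφA⟩ := hφε
  have hφ1 : φ ≤ 1 := by linarith
  -- imaginary part lower bound
  have hsin1 := sin_close φ hφ0 hφ1
  have hsin2 := sin_close (2*φ) (by linarith) (by linarith)
  have hIm : 3/4* |B| *φ ≤ |(lam gx ρx φ).im| := by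
    rw [lam_im_eq, ← hβ1, ← hβ2]
    set E := gx*(β1*(Real.sin φ - φ) + β2*(Real.sin (2*φ) - 2*φ)) with hEdef
    clear_value E
    have key : gx * (β1 * Real.sin φ + β2 * Real.sin (2*φ)) = B*φ + E := by
      rw [hBdef, hEdef]; ring
    rw [key]
    have hE : |E| ≤ K*φ^3 := by
      rw [hEdef, abs_mul]
      calc |gx| * |β1*(Real.sin φ - φ) + β2*(Real.sin (2*φ) - 2*φ)|
          ≤ |gx| * ((|β1| + 8* |β2|)*φ^3) := by
            refine mul_le_mul_of_nonneg_left ?_ (abs_nonneg gx)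
            calc |β1*(Real.sin φ - φ) + β2*(Real.sin (2*φ) - 2*φ)|
                ≤ |β1| * |Real.sin φ - φ| + |β2| * |Real.sin (2*φ) - 2*φ| := by
                  refine (abs_add_le _ _).trans ?_
                  rw [abs_mul, abs_mul]
              _ ≤ |β1| *(φ^3/4) + |β2| *((2*φ)^3/4) := by
                  refine add_le_add ?_ ?_
                  · exact mul_le_mul_of_nonneg_left hsin1 (abs_nonneg _)
                  · exact mul_le_mul_of_nonneg_left hsin2 (abs_nonneg _)
              _ ≤ (|β1| + 8* |β2|)*φ^3 := by nlinarith [abs_nonneg β1, abs_nonneg β2, pow_pos hφ0 3]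
        _ = K*φ^3 := by rw [hKdef]; ring
    have hKφ : K*φ^3 ≤ 1/4* |B| *φ := by
      have h4 : φ * (4*K) < |B| := (lt_div_iff₀ (by linarith)).mp hφK
      have e1 : K*φ < |B|/4 := by linarith
      have e2 : K*φ^2 ≤ K*φ := by
        nlinarith [mul_nonneg (mul_nonneg hKpos.le hφ0.le) (sub_nonneg.mpr hφ1)]
      calc K*φ^3 = (K*φ^2)*φ := by ring
        _ ≤ (K*φ)*φ := mul_le_mul_of_nonneg_right e2 hφ0.le
        _ ≤ (|B|/4)*φ := mul_le_mul_of_nonneg_right e1.le hφ0.le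
        _ = 1/4* |B| *φ := by ring
    have htri : |B*φ| - |E| ≤ |B*φ + E| := by
      have := abs_add_le (B*φ + E) (-E)
      simp only [add_neg_cancel_right, abs_neg] at this
      linarith
    rw [abs_mul, abs_of_nonneg hφ0.le] at htri
    linarith
  -- magnitude bounds
  have hLx : ‖lam gx ρx φ‖ ≤ Mx * φ := by
    rw [hMxdef, hSxdef]; exact lam_abs_le gx ρx φ hxsum hφ0.le hφ12.le
  have hLv : ‖lam gv ρv φ‖ ≤ Mv * φ := by
    rw [hMvdef, hSvdef]; exact lam_abs_le gv ρv φ hvsum hφ0.le hφ12.le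
  set Lx := lam gx ρx φ with hLxdef
  set Lv := lam gv ρv φ with hLvdef
  clear_value Lx Lv
  set z := Lv^2 + 4*Lx with hzdef
  have hzabs : ‖z‖ ≤ A*φ := by
    calc ‖z‖ ≤ ‖Lv^2‖ + ‖4*Lx‖ := norm_add_le _ _
      _ = ‖Lv‖^2 + 4*‖Lx‖ := by
          rw [norm_pow, norm_mul]
          norm_num
      _ ≤ (Mv*φ)^2 + 4*(Mx*φ) := by
          refine add_le_add (pow_le_pow_left₀ (norm_nonneg _) hLv 2) (by linarith)
      _ ≤ A*φ := by rw [hAdef]; nlinarith [sq_nonneg Mv, mul_nonneg hMv0 hφ0.le]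
  have hzim : 2* |B| *φ ≤ |z.im| := by
    have h1 : z.im = (Lv^2).im + 4*Lx.im := by
      rw [hzdef, Complex.add_im]
      simp
    have h2 : |(Lv^2).im| ≤ (Mv*φ)^2 := by
      refine (Complex.abs_im_le_norm _).trans ?_
      rw [norm_pow]
      exact pow_le_pow_left₀ (norm_nonneg _) hLv 2
    have h3 : (Mv*φ)^2 ≤ |B| *φ := by
      have e0 : φ * (Mv^2+1) < |B| := (lt_div_iff₀ (by nlinarith [sq_nonneg Mv])).mp hφMv
      have e : Mv^2*φ ≤ |B| := by nlinarith
      nlinarith [mul_le_mul_of_nonneg_right e hφ0.le]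
    have htri : 4* |Lx.im| - |(Lv^2).im| ≤ |z.im| := by
      have h4 : |4*Lx.im| - |(Lv^2).im| ≤ |(Lv^2).im + 4*Lx.im| := by
        have := abs_add_le ((Lv^2).im + 4*Lx.im) (-(Lv^2).im)
        simp only [abs_neg] at this
        have e : (Lv^2).im + 4*Lx.im + -(Lv^2).im = 4*Lx.im := by ring
        rw [e] at this
        linarith
      rw [← h1] at h4
      rw [abs_mul] at h4
      norm_num at h4
      linarith
    linarith
  -- square root with nonnegative real part
  obtain ⟨w0, hw0⟩ := IsAlgClosed.exists_pow_nat_eq z (n := 2) (by norm_num)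
  have hw : ∃ w : ℂ, w^2 = z ∧ 0 ≤ w.re := by
    rcases le_or_gt 0 w0.re with h' | h'
    · exact ⟨w0, hw0, h'⟩
    · exact ⟨-w0, by rw [neg_sq]; exact hw0, by rw [Complex.neg_re]; linarith⟩
  obtain ⟨w, hw2, hwre0⟩ := hw
  have hAφpos : 0 < A*φ := mul_pos hApos hφ0
  have hwabs : ‖w‖ ≤ Real.sqrt (A*φ) := by
    rw [Real.le_sqrt (norm_nonneg _) hAφpos.le]
    calc ‖w‖^2 = ‖w^2‖ := (norm_pow _ _).symm
      _ = ‖z‖ := by rw [hw2]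
      _ ≤ A*φ := hzabs
  have him_w : |z.im| ≤ 2*w.re*Real.sqrt (A*φ) := by
    have e : z.im = 2*(w.re*w.im) := by rw [← hw2, sq, Complex.mul_im]; ring
    rw [e, abs_mul, abs_mul, abs_of_nonneg hwre0]
    have : |w.im| ≤ Real.sqrt (A*φ) := (Complex.abs_im_le_norm w).trans hwabs
    calc |(2:ℝ)| * (w.re * |w.im|) ≤ 2 * (w.re * Real.sqrt (A*φ)) := by
          rw [abs_two]
          exact mul_le_mul_of_nonneg_left (mul_le_mul_of_nonneg_left this hwre0) (by norm_num)
      _ = 2*w.re*Real.sqrt (A*φ) := by ring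
  have hsqrtpos : 0 < Real.sqrt (A*φ) := Real.sqrt_pos.mpr hAφpos
  have hwre : Mv*φ < w.re := by
    have hs : Real.sqrt (A*φ) ≤ |B|/(Mv+1) := by
      rw [show |B|/(Mv+1) = Real.sqrt ((|B|/(Mv+1))^2) from (Real.sqrt_sq (by positivity)).symm]
      refine Real.sqrt_le_sqrt ?_
      rw [div_pow]
      have : A*φ < |B|^2/((Mv+1)^2) := by
        have := (lt_div_iff₀ (by positivity)).mp hφA
        rw [lt_div_iff₀ (by positivity)]
        nlinarith
      linarith
    have hqpos : 0 < |B|/(Mv+1) := by positivity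
    have h1 : Mv*φ*Real.sqrt (A*φ) < |B| *φ := by
      have e1 : Mv*φ*Real.sqrt (A*φ) ≤ Mv*φ*(|B|/(Mv+1)) :=
        mul_le_mul_of_nonneg_left hs (mul_nonneg hMv0 hφ0.le)
      have e2 : Mv*φ*(|B|/(Mv+1)) < |B| *φ := by
        rw [div_eq_mul_inv]
        have hinv : 0 < (Mv+1)⁻¹ := by positivity
        have : Mv*φ*(|B| *(Mv+1)⁻¹)*(Mv+1) < |B| *φ*(Mv+1) := by
          have hc : (Mv+1)⁻¹*(Mv+1) = 1 := inv_mul_cancel₀ (by linarith)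
          calc Mv*φ*(|B| *(Mv+1)⁻¹)*(Mv+1) = Mv*φ* |B| *((Mv+1)⁻¹*(Mv+1)) := by ring
            _ = Mv*φ* |B| := by rw [hc]; ring
            _ < |B| *φ*(Mv+1) := by nlinarith [mul_pos hφ0 hBpos]
        exact lt_of_mul_lt_mul_right this (by linarith)
      linarith
    have h2 : |B| *φ ≤ w.re*Real.sqrt (A*φ) := by nlinarith [hzim.trans him_w]
    exact lt_of_mul_lt_mul_right (h1.trans_le h2) hsqrtpos.le
  -- construct the root
  refine ⟨(((1:ℝ)/2 : ℝ) : ℂ) * (Lv + w), ?_, ?_⟩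
  · have expand : ((((1:ℝ)/2 : ℝ) : ℂ) * (Lv + w))^2 - Lv * ((((1:ℝ)/2 : ℝ) : ℂ) * (Lv + w)) - Lx
        = (w^2 - z) / 4 := by
      rw [hzdef]; push_cast; ring
    rw [expand, hw2, sub_self, zero_div]
  · rw [Complex.re_ofReal_mul, Complex.add_re]
    have hLvre : |Lv.re| ≤ Mv*φ := (Complex.abs_re_le_norm _).trans hLv
    have := (abs_le.mp hLvre).1
    nlinarith
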